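/- Let S be a finite set, K : S × S → ℝ a rate matrix, and s_f ∈ S a target state reachable from every state s ∈ S \ {s_f} via a finite sequence of transitions with positive rates. Let Q̃ be the submatrix of the generator Q of K obtained by deleting the row and column of s_f, and let t be the unique solution of Q̃ t = -1. Then t is componentwise positive: t_s > 0 for every s ∈ S \ {s_f}. More generally, the matrix (-Q̃)^{-1} has all entries nonnegative. -/

import Mathlib

open Finset in
/-- Row analysis at a minimizer. -/
lemma mfpt_row_lemma
    {S : Type*} [Fintype S] [DecidableEq S]
    (K : S → S → ℝ)
    (hKnonneg : ∀ s s', 0 ≤ K s s')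
    (hKdiag : ∀ s, K s s = 0)
    (sf : S)
    (Qt : Matrix {s : S // s ≠ sf} {s : S // s ≠ sf} ℝ)
    (hQt : ∀ a b : {s : S // s ≠ sf}, Qt a b =
      if a = b then -∑ s'' ∈ Finset.univ.erase a.1, K a.1 s'' else K a.1 b.1)
    (x : {s : S // s ≠ sf} → ℝ) (m : ℝ) (hm : m < 0)
    (hmin : ∀ a, m ≤ x a)
    (s : {s : S // s ≠ sf}) (hxs : x s = m)
    (hrow : Qt.mulVec x s ≤ 0) :
    K s.1 sf = 0 ∧ ∀ a : {s : S // s ≠ sf}, 0 < K s.1 a.1 → x a = m := by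
  set D : ℝ := ∑ s'' ∈ Finset.univ.erase s.1, K s.1 s'' with hD
  have hsplit : Qt.mulVec x s = -D * m +
      ∑ a ∈ (univ : Finset {s : S // s ≠ sf}).erase s, K s.1 a.1 * x a := by
    simp only [Matrix.mulVec, dotProduct]
    rw [← Finset.add_sum_erase _ _ (Finset.mem_univ s)]
    congr 1
    · rw [hQt s s, if_pos rfl, hxs, neg_mul]
    · apply Finset.sum_congr rfl
      intro a ha
      rw [hQt s a, if_neg (Finset.ne_of_mem_erase ha).symm]
  have hDsplit : D = K s.1 sf + ∑ a ∈ (univ : Finset {s : S // s ≠ sf}).erase s, K s.1 a.1 := by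
    have h1 : D = ∑ s'' : S, K s.1 s'' := by
      rw [hD]; exact Finset.sum_erase _ (hKdiag s.1)
    have h2 : (∑ s'' : S, K s.1 s'') = K s.1 sf + ∑ s'' ∈ (univ : Finset S).erase sf, K s.1 s'' :=
      (Finset.add_sum_erase _ _ (Finset.mem_univ sf)).symm
    have h3 : (∑ s'' ∈ (univ : Finset S).erase sf, K s.1 s'')
        = ∑ a : {s : S // s ≠ sf}, K s.1 a.1 :=
      Finset.sum_subtype _ (fun y => by simp) _
    have h4 : (∑ a : {s : S // s ≠ sf}, K s.1 a.1)
        = ∑ a ∈ (univ : Finset {s : S // s ≠ sf}).erase s, K s.1 a.1 := by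
      symm
      apply Finset.sum_erase
      exact hKdiag s.1
    rw [h1, h2, h3, h4]
  have hterm : ∀ a ∈ (univ : Finset {s : S // s ≠ sf}).erase s, K s.1 a.1 * m ≤ K s.1 a.1 * x a :=
    fun a _ => mul_le_mul_of_nonneg_left (hmin a) (hKnonneg _ _)
  have hsumge : (∑ a ∈ (univ : Finset {s : S // s ≠ sf}).erase s, K s.1 a.1) * m ≤
      ∑ a ∈ (univ : Finset {s : S // s ≠ sf}).erase s, K s.1 a.1 * x a := by
    rw [Finset.sum_mul]
    exact Finset.sum_le_sum hterm
  have hrow' := hsplit ▸ hrow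
  have hKsf : K s.1 sf = 0 := by
    have h0 : 0 ≤ K s.1 sf := hKnonneg _ _
    nlinarith [hrow', hsumge, hDsplit]
  refine ⟨hKsf, ?_⟩
  have hsum0 : (∑ a ∈ (univ : Finset {s : S // s ≠ sf}).erase s, K s.1 a.1 * (x a - m)) = 0 := by
    have hD' : D = ∑ a ∈ (univ : Finset {s : S // s ≠ sf}).erase s, K s.1 a.1 := by
      rw [hDsplit, hKsf]; ring
    have hle : (∑ a ∈ (univ : Finset {s : S // s ≠ sf}).erase s, K s.1 a.1 * (x a - m)) ≤ 0 := by
      calc (∑ a ∈ (univ : Finset {s : S // s ≠ sf}).erase s, K s.1 a.1 * (x a - m))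
          = -D * m + ∑ a ∈ (univ : Finset {s : S // s ≠ sf}).erase s, K s.1 a.1 * x a := by
            have hexp : (∑ a ∈ (univ : Finset {s : S // s ≠ sf}).erase s, K s.1 a.1 * (x a - m))
                = (∑ a ∈ (univ : Finset {s : S // s ≠ sf}).erase s, K s.1 a.1 * x a)
                  - (∑ a ∈ (univ : Finset {s : S // s ≠ sf}).erase s, K s.1 a.1) * m := by
              rw [Finset.sum_mul, ← Finset.sum_sub_distrib]
              exact Finset.sum_congr rfl fun a _ => by ring
            rw [hexp, hD']
            ring
        _ ≤ 0 := hrow'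
    have hge : 0 ≤ ∑ a ∈ (univ : Finset {s : S // s ≠ sf}).erase s, K s.1 a.1 * (x a - m) :=
      Finset.sum_nonneg fun a _ => mul_nonneg (hKnonneg _ _) (by linarith [hmin a])
    linarith
  intro a hKa
  rcases eq_or_ne a s with rfl | hne
  · exact hxs
  · have ha : a ∈ (univ : Finset {s : S // s ≠ sf}).erase s :=
      Finset.mem_erase.2 ⟨hne, Finset.mem_univ a⟩
    have h0 := (Finset.sum_eq_zero_iff_of_nonneg
      (fun b _ => mul_nonneg (hKnonneg _ _) (by linarith [hmin b]))).1 hsum0 a ha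
    have : x a - m = 0 := by
      rcases mul_eq_zero.1 h0 with h | h
      · exact absurd h (ne_of_gt hKa)
      · exact h
    linarith

open Finset in
/-- Minimum principle: if `Qt.mulVec x ≤ 0` componentwise then `x ≥ 0`. -/
lemma mfpt_nonneg_lemma
    {S : Type*} [Fintype S] [DecidableEq S]
    (K : S → S → ℝ)
    (hKnonneg : ∀ s s', 0 ≤ K s s')
    (hKdiag : ∀ s, K s s = 0)
    (sf : S)
    (hreach : ∀ s, s ≠ sf → ∃ (m : ℕ) (p : ℕ → S), p 0 = s ∧ p m = sf ∧
      ∀ i < m, 0 < K (p i) (p (i + 1)))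
    (Qt : Matrix {s : S // s ≠ sf} {s : S // s ≠ sf} ℝ)
    (hQt : ∀ a b : {s : S // s ≠ sf}, Qt a b =
      if a = b then -∑ s'' ∈ Finset.univ.erase a.1, K a.1 s'' else K a.1 b.1)
    (x : {s : S // s ≠ sf} → ℝ)
    (hrow : ∀ a, Qt.mulVec x a ≤ 0) :
    ∀ s, 0 ≤ x s := by
  by_contra hcon
  push_neg at hcon
  obtain ⟨sneg, hsneg⟩ := hcon
  haveI : Nonempty {s : S // s ≠ sf} := ⟨sneg⟩
  obtain ⟨s₀, -, hs₀min⟩ := Finset.exists_min_image (univ : Finset {s : S // s ≠ sf}) x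
    ⟨sneg, Finset.mem_univ _⟩
  set m := x s₀ with hmdef
  have hm : m < 0 := lt_of_le_of_lt (hs₀min sneg (Finset.mem_univ _)) hsneg
  have hmin : ∀ a, m ≤ x a := fun a => hs₀min a (Finset.mem_univ _)
  have key : ∀ s : {s : S // s ≠ sf}, x s = m →
      K s.1 sf = 0 ∧ ∀ a : {s : S // s ≠ sf}, 0 < K s.1 a.1 → x a = m :=
    fun s hxs => mfpt_row_lemma K hKnonneg hKdiag sf Qt hQt x m hm hmin s hxs (hrow s)
  obtain ⟨n, p, hp0, hpn, hpos⟩ := hreach s₀.1 s₀.2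
  have hexists : ∃ k, p k = sf := ⟨n, hpn⟩
  classical
  set k := Nat.find hexists with hkdef
  have hk : p k = sf := Nat.find_spec hexists
  have hkmin : ∀ j < k, p j ≠ sf := fun j hj => Nat.find_min hexists hj
  have hkn : k ≤ n := Nat.find_min' hexists hpn
  have hk1 : 1 ≤ k := by
    rcases Nat.eq_zero_or_pos k with h0 | h
    · exact absurd (by rw [← hp0, ← h0, hk]) s₀.2
    · exact h
  have hpath : ∀ j (hj : j < k), x ⟨p j, hkmin j hj⟩ = m := by
    intro j
    induction j with
    | zero =>
        intro hj
        have he : (⟨p 0, hkmin 0 hj⟩ : {s : S // s ≠ sf}) = s₀ := Subtype.ext hp0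
        rw [he]
    | succ j ih =>
        intro hj
        have hj' : j < k := Nat.lt_of_succ_lt hj
        have hxj : x ⟨p j, hkmin j hj'⟩ = m := ih hj'
        have hjn : j < n := lt_of_lt_of_le hj' hkn
        exact (key _ hxj).2 ⟨p (j+1), hkmin _ hj⟩ (hpos j hjn)
  have hlast : k - 1 < k := Nat.sub_lt hk1 one_pos
  have hxlast : x ⟨p (k-1), hkmin _ hlast⟩ = m := hpath _ hlast
  have hzero : K (p (k-1)) sf = 0 := (key _ hxlast).1
  have hposlast : 0 < K (p (k-1)) (p k) := by
    have h1 : k - 1 < n := lt_of_lt_of_le hlast hkn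
    have h2 := hpos (k-1) h1
    rwa [Nat.sub_add_cancel hk1] at h2
  rw [hk, hzero] at hposlast
  exact lt_irrefl 0 hposlast

/-- Under the reachability hypothesis, the mean first passage time vector
`t` solving `Q̃ t = -1` is componentwise positive, and the matrix `(-Q̃)⁻¹` has all
entries nonnegative. -/
theorem mfpt_vector_positive
    {S : Type*} [Fintype S] [DecidableEq S]
    (K : S → S → ℝ)
    (hKnonneg : ∀ s s', 0 ≤ K s s')
    (hKdiag : ∀ s, K s s = 0)
    (sf : S)
    (hreach : ∀ s, s ≠ sf → ∃ (m : ℕ) (p : ℕ → S), p 0 = s ∧ p m = sf ∧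
      ∀ i < m, 0 < K (p i) (p (i + 1)))
    (Q : S → S → ℝ)
    (hQ : ∀ s s', Q s s' =
      if s = s' then -∑ s'' ∈ Finset.univ.erase s, K s s'' else K s s')
    (Qt : Matrix {s : S // s ≠ sf} {s : S // s ≠ sf} ℝ)
    (hQt : ∀ a b, Qt a b = Q a b)
    (t : {s : S // s ≠ sf} → ℝ)
    (ht : Qt.mulVec t = fun _ => -1) :
    (∀ s, 0 < t s) ∧ (∀ i j, 0 ≤ (-Qt)⁻¹ i j) := by
  classical
  have hQt' : ∀ a b : {s : S // s ≠ sf}, Qt a b =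
      if a = b then -∑ s'' ∈ Finset.univ.erase a.1, K a.1 s'' else K a.1 b.1 := by
    intro a b
    rw [hQt a b, hQ a.1 b.1]
    by_cases h : a = b
    · rw [if_pos h, if_pos (congrArg Subtype.val h)]
    · rw [if_neg h, if_neg (fun hv => h (Subtype.ext hv))]
  constructor
  · have htn : ∀ s, 0 ≤ t s := by
      apply mfpt_nonneg_lemma K hKnonneg hKdiag sf hreach Qt hQt' t
      intro a
      rw [ht]
      norm_num
    intro s
    have hrow : Qt.mulVec t s = -1 := by rw [ht]
    set D : ℝ := ∑ s'' ∈ Finset.univ.erase s.1, K s.1 s'' with hD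
    have hDnn : 0 ≤ D := Finset.sum_nonneg fun a _ => hKnonneg _ _
    have hsplit : Qt.mulVec t s = -D * t s +
        ∑ a ∈ (Finset.univ : Finset {s : S // s ≠ sf}).erase s, K s.1 a.1 * t a := by
      simp only [Matrix.mulVec, dotProduct]
      rw [← Finset.add_sum_erase _ _ (Finset.mem_univ s)]
      congr 1
      · rw [hQt' s s, if_pos rfl, neg_mul]
      · apply Finset.sum_congr rfl
        intro a ha
        rw [hQt' s a, if_neg (Finset.ne_of_mem_erase ha).symm]
    have hrest : 0 ≤ ∑ a ∈ (Finset.univ : Finset {s : S // s ≠ sf}).erase s, K s.1 a.1 * t a :=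
      Finset.sum_nonneg fun a _ => mul_nonneg (hKnonneg _ _) (htn a)
    have hrow' := hsplit ▸ hrow
    have hDt : 1 ≤ D * t s := by nlinarith [hrow']
    nlinarith [htn s, hDnn]
  · intro i j
    by_cases hdet : IsUnit (-Qt).det
    · set x : {s : S // s ≠ sf} → ℝ := fun i => (-Qt)⁻¹ i j with hx
      have hcol : (-Qt).mulVec x = Pi.single j 1 := by
        have h1 : (-Qt) * (-Qt)⁻¹ = 1 := Matrix.mul_nonsing_inv _ hdet
        have h2 : ((-Qt) * (-Qt)⁻¹).mulVec (Pi.single j 1) = Pi.single j 1 := by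
          rw [h1, Matrix.one_mulVec]
        rw [← Matrix.mulVec_mulVec, Matrix.mulVec_single] at h2
        simp at h2; exact h2
      have hrowx : ∀ a, Qt.mulVec x a ≤ 0 := by
        intro a
        have hneg : Qt.mulVec x a = -((-Qt).mulVec x a) := by
          rw [Matrix.neg_mulVec]; simp
        rw [hneg, hcol]
        by_cases h : a = j
        · subst h; simp
        · simp [Pi.single_apply, h]
      exact mfpt_nonneg_lemma K hKnonneg hKdiag sf hreach Qt hQt' x hrowx i
    · rw [Matrix.nonsing_inv_apply_not_isUnit _ hdet]
      simp
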